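/- Let E = ({0} × [0,1]) ∪ ⋃_{n=1}^∞ ( ({1/n} × [0,1]) ∪ ([1/(2n), 1/(2n−1)] × {1}) ∪ ([1/(2n+1), 1/(2n)] × {0}) ) ⊆ [0,1]². Then E is a B₁-retract of [0,1]². -/

import Mathlib

/-- A function between topological spaces is *Baire-one* if it is a pointwise limit of a
sequence of continuous functions. -/
def IsBaireOne {X Y : Type*} [TopologicalSpace X] [TopologicalSpace Y] (f : X → Y) : Prop :=
  ∃ g : ℕ → X → Y, (∀ n, Continuous (g n)) ∧
    ∀ x, Filter.Tendsto (fun n => g n x) Filter.atTop (nhds (f x))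

/-- A subset `E` of a topological space `X` is a *B₁-retract* of `X` if there exists a
Baire-one function `r : X → E` such that `r x = x` for all `x ∈ E`. -/
def IsB1Retract {X : Type*} [TopologicalSpace X] (E : Set X) : Prop :=
  ∃ r : X → E, IsBaireOne r ∧ ∀ x (hx : x ∈ E), (r x : X) = x

/-- The "comb" set
`E = ({0}×[0,1]) ∪ ⋃ₙ (({1/n}×[0,1]) ∪ ([1/(2n),1/(2n−1)]×{1}) ∪ ([1/(2n+1),1/(2n)]×{0}))`,
where `n` ranges over `{1, 2, 3, …}`. -/
def combSet : Set (ℝ × ℝ) :=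
  ({0} ×ˢ Set.Icc (0 : ℝ) 1) ∪
    ⋃ n : ℕ, (({1 / ((n : ℝ) + 1)} ×ˢ Set.Icc (0 : ℝ) 1) ∪
      (Set.Icc (1 / (2 * ((n : ℝ) + 1))) (1 / (2 * ((n : ℝ) + 1) - 1)) ×ˢ {(1 : ℝ)}) ∪
      (Set.Icc (1 / (2 * ((n : ℝ) + 1) + 1)) (1 / (2 * ((n : ℝ) + 1))) ×ˢ {(0 : ℝ)}))



namespace CombB1

/-- parametrization of the three sides (left, top, right) of `[-1,1] × [0,1]`. -/
noncomputable def phi (t : ℝ) : ℝ × ℝ :=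
  (max (-1) (min 1 (2*t - 3)), min t (min (3 - t) 1))

noncomputable def tau (q : ℝ × ℝ) : ℝ :=
  (1 - q.2) * (3*(q.1 + 1)/2) + q.2 * ((q.1 + 3)/2)

lemma phi_cont : Continuous phi := by
  unfold phi; fun_prop

lemma tau_cont : Continuous tau := by
  unfold tau; fun_prop

lemma phi_left {t : ℝ} (h0 : 0 ≤ t) (h1 : t ≤ 1) : phi t = (-1, t) := by
  unfold phi
  have hx : max (-1) (min 1 (2*t-3)) = -1 := by
    rw [min_eq_right (by linarith), max_eq_left (by linarith)]
  have hy : min t (min (3 - t) 1) = t :=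
    min_eq_left (le_min (by linarith) h1)
  rw [hx, hy]

lemma phi_top {t : ℝ} (h0 : 1 ≤ t) (h1 : t ≤ 2) : phi t = (2*t - 3, 1) := by
  unfold phi
  have hx : max (-1) (min 1 (2*t-3)) = 2*t-3 := by
    rw [min_eq_right (by linarith), max_eq_right (by linarith)]
  have hy : min t (min (3 - t) 1) = 1 := by
    rw [min_eq_right (by linarith : (1:ℝ) ≤ 3 - t), min_eq_right h0]
  rw [hx, hy]

lemma phi_right {t : ℝ} (h0 : 2 ≤ t) (h1 : t ≤ 3) : phi t = (1, 3 - t) := by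
  unfold phi
  have hx : max (-1) (min 1 (2*t-3)) = 1 := by
    rw [min_eq_left (by linarith), max_eq_right (by linarith)]
  have hy : min t (min (3 - t) 1) = 3 - t := by
    rw [min_eq_left (by linarith : 3 - t ≤ (1:ℝ)), min_eq_right (by linarith)]
  rw [hx, hy]

lemma tau_left {y : ℝ} : tau (-1, y) = y := by unfold tau; ring

lemma tau_right {y : ℝ} : tau (1, y) = 3 - y := by unfold tau; ring

lemma tau_top {u : ℝ} : tau (u, 1) = (u + 3)/2 := by unfold tau; ring

lemma tau_mem {u y : ℝ} (hu1 : -1 ≤ u) (hu2 : u ≤ 1) (hy0 : 0 ≤ y) (hy1 : y ≤ 1) :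
    0 ≤ tau (u, y) ∧ tau (u, y) ≤ 3 := by
  unfold tau
  constructor <;> nlinarith

end CombB1

namespace CombB1

/-- left endpoint of strip `k` -/
noncomputable def cA (k : ℕ) : ℝ := 1 / ((k : ℝ) + 2)
/-- right endpoint of strip `k` -/
noncomputable def cB (k : ℕ) : ℝ := 1 / ((k : ℝ) + 1)
/-- affine coordinate on strip `k`, sending `[cA k, cB k]` to `[-1,1]` -/
noncomputable def cU (k : ℕ) (x : ℝ) : ℝ := 2 * ((k:ℝ)+1) * ((k:ℝ)+2) * x - (2*(k:ℝ)+3)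
/-- inverse affine map -/
noncomputable def cX (k : ℕ) (v : ℝ) : ℝ := cA k + (v + 1) / (2 * ((k:ℝ)+1) * ((k:ℝ)+2))

lemma k1_pos (k : ℕ) : (0:ℝ) < (k:ℝ) + 1 := by positivity
lemma k2_pos (k : ℕ) : (0:ℝ) < (k:ℝ) + 2 := by positivity

lemma cA_pos (k : ℕ) : 0 < cA k := by unfold cA; positivity
lemma cB_pos (k : ℕ) : 0 < cB k := by unfold cB; positivity
lemma cA_lt_cB (k : ℕ) : cA k < cB k := by
  unfold cA cB
  apply one_div_lt_one_div_of_lt (k1_pos k); linarith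
lemma cB_le_one (k : ℕ) : cB k ≤ 1 := by
  unfold cB
  rw [div_le_one (k1_pos k)]
  have : (0:ℝ) ≤ (k:ℝ) := Nat.cast_nonneg k
  linarith
lemma cA_le_one (k : ℕ) : cA k ≤ 1 := le_of_lt (lt_of_lt_of_le (cA_lt_cB k) (cB_le_one k))

lemma cA_eq_cB_succ (k : ℕ) : cA k = cB (k+1) := by
  unfold cA cB; push_cast; ring_nf

lemma cA_antitone {j k : ℕ} (h : j ≤ k) : cA k ≤ cA j := by
  unfold cA
  apply one_div_le_one_div_of_le (k2_pos j)
  have : (j:ℝ) ≤ (k:ℝ) := Nat.cast_le.mpr h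
  linarith

lemma cX_cU (k : ℕ) (x : ℝ) : cX k (cU k x) = x := by
  unfold cX cU cA
  have h1 := k1_pos k; have h2 := k2_pos k
  field_simp
  ring

lemma cU_cA (k : ℕ) : cU k (cA k) = -1 := by
  unfold cU cA
  have h2 := k2_pos k
  field_simp
  ring

lemma cU_cB (k : ℕ) : cU k (cB k) = 1 := by
  unfold cU cB
  have h1 := k1_pos k
  field_simp
  ring

lemma cU_mem {k : ℕ} {x : ℝ} (h1 : cA k ≤ x) (h2 : x ≤ cB k) :
    -1 ≤ cU k x ∧ cU k x ≤ 1 := by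
  have e1 := cU_cA k
  have e2 := cU_cB k
  have hk1 := k1_pos k; have hk2 := k2_pos k
  have hD : (0:ℝ) ≤ 2 * ((k:ℝ)+1) * ((k:ℝ)+2) := by positivity
  constructor
  · rw [← e1]; unfold cU
    have := mul_le_mul_of_nonneg_left h1 hD; linarith
  · rw [← e2]; unfold cU
    have := mul_le_mul_of_nonneg_left h2 hD; linarith

lemma cX_mem {k : ℕ} {v : ℝ} (h1 : -1 ≤ v) (h2 : v ≤ 1) :
    cA k ≤ cX k v ∧ cX k v ≤ cB k := by
  have hk1 := k1_pos k; have hk2 := k2_pos k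
  constructor
  · unfold cX; nlinarith [div_nonneg (by linarith : (0:ℝ) ≤ v + 1) (by positivity : (0:ℝ) ≤ 2 * ((k:ℝ)+1) * ((k:ℝ)+2))]
  · have hXB : cX k 1 = cB k := by
      unfold cX cA cB; field_simp; ring
    rw [← hXB]; unfold cX
    have hD : (0:ℝ) < 2 * ((k:ℝ)+1) * ((k:ℝ)+2) := by positivity
    have := (div_le_div_iff_of_pos_right hD).mpr (by linarith : v + 1 ≤ 1 + 1)
    linarith

lemma cX_cont (k : ℕ) : Continuous (cX k) := by unfold cX; fun_prop
lemma cU_cont (k : ℕ) : Continuous (cU k) := by unfold cU; fun_prop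

/-- the orientation flip for odd strips -/
noncomputable def yin (k : ℕ) (y : ℝ) : ℝ := if Even k then y else 1 - y

lemma yin_yin (k : ℕ) (y : ℝ) : yin k (yin k y) = y := by
  unfold yin; split <;> ring

lemma yin_mem {k : ℕ} {y : ℝ} (h0 : 0 ≤ y) (h1 : y ≤ 1) :
    0 ≤ yin k y ∧ yin k y ≤ 1 := by
  unfold yin; split <;> constructor <;> linarith

end CombB1

namespace CombB1

/-- retraction of strip `k` of the square onto its part of the comb -/
noncomputable def cF (k : ℕ) (p : ℝ × ℝ) : ℝ × ℝ :=
  ((cX k (phi (tau (cU k p.1, yin k p.2))).1), yin k (phi (tau (cU k p.1, yin k p.2))).2)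

lemma cF_cont (k : ℕ) : Continuous (cF k) := by
  unfold cF yin
  split <;> (unfold phi tau cX cU cA; fun_prop)

lemma cX_neg_one (k : ℕ) : cX k (-1) = cA k := by unfold cX; simp
lemma cX_one (k : ℕ) : cX k 1 = cB k := by unfold cX cA cB; field_simp; ring

lemma cF_fix_left {k : ℕ} {y : ℝ} (h0 : 0 ≤ y) (h1 : y ≤ 1) :
    cF k (cA k, y) = (cA k, y) := by
  obtain ⟨hy0, hy1⟩ := yin_mem (k := k) h0 h1
  unfold cF
  simp only [cU_cA, tau_left, phi_left hy0 hy1, yin_yin, cX_neg_one]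

lemma cF_fix_right {k : ℕ} {y : ℝ} (h0 : 0 ≤ y) (h1 : y ≤ 1) :
    cF k (cB k, y) = (cB k, y) := by
  obtain ⟨hy0, hy1⟩ := yin_mem (k := k) h0 h1
  unfold cF
  have h3 : phi (tau (1, yin k y)) = (1, yin k y) := by
    rw [tau_right, phi_right (by linarith) (by linarith)]
    norm_num
  simp only [cU_cB, h3, yin_yin, cX_one]

lemma cF_fix_conn {k : ℕ} {x : ℝ} (h1 : cA k ≤ x) (h2 : x ≤ cB k) :
    cF k (x, yin k 1) = (x, yin k 1) := by
  obtain ⟨hu1, hu2⟩ := cU_mem h1 h2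
  unfold cF
  have h3 : phi (tau (cU k x, yin k (yin k 1))) = (cU k x, 1) := by
    rw [yin_yin, tau_top, phi_top (by linarith) (by linarith)]
    have : 2 * ((cU k x + 3)/2) - 3 = cU k x := by ring
    rw [this]
  simp only [h3, cX_cU]

lemma tooth_eq (n : ℕ) : (1:ℝ) / ((n:ℝ) + 1) = cB n := rfl

lemma cF_mem {k : ℕ} {p : ℝ × ℝ} (h1 : cA k ≤ p.1) (h2 : p.1 ≤ cB k)
    (h3 : 0 ≤ p.2) (h4 : p.2 ≤ 1) : cF k p ∈ combSet := by
  obtain ⟨hu1, hu2⟩ := cU_mem h1 h2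
  obtain ⟨hy0, hy1⟩ := yin_mem (k := k) h3 h4
  obtain ⟨ht0, ht3⟩ := tau_mem hu1 hu2 hy0 hy1
  set t := tau (cU k p.1, yin k p.2) with ht
  unfold cF
  rw [← ht]
  rcases le_or_gt t 1 with hc1 | hc1
  · -- left tooth of the strip : x = cA k = 1/(k+2)
    rw [phi_left ht0 hc1]
    refine Set.mem_union_right _ (Set.mem_iUnion.mpr ⟨k + 1, ?_⟩)
    refine Set.mem_union_left _ (Set.mem_union_left _ ?_)
    refine ⟨?_, Set.mem_Icc.mpr (yin_mem ht0 hc1)⟩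
    simp only [Set.mem_singleton_iff, cX_neg_one]
    unfold cA; push_cast; ring_nf
  · rcases le_or_gt t 2 with hc2 | hc2
    · -- the connecting segment
      rw [phi_top hc1.le hc2]
      have hv1 : -1 ≤ 2*t - 3 := by linarith
      have hv2 : 2*t - 3 ≤ 1 := by linarith
      obtain ⟨hx1, hx2⟩ := cX_mem (k := k) hv1 hv2
      rcases Nat.even_or_odd k with he | ho
      · obtain ⟨m, hm⟩ := he
        have hyin : yin k 1 = 1 := by unfold yin; rw [if_pos ⟨m, hm⟩]
        refine Set.mem_union_right _ (Set.mem_iUnion.mpr ⟨m, ?_⟩)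
        refine Set.mem_union_left _ (Set.mem_union_right _ ?_)
        refine ⟨Set.mem_Icc.mpr ⟨?_, ?_⟩, by rw [hyin]; rfl⟩
        · have : (1:ℝ) / (2 * ((m:ℝ) + 1)) = cA k := by
            unfold cA; subst hm; push_cast; ring_nf
          rw [this]; exact hx1
        · have : (1:ℝ) / (2 * ((m:ℝ) + 1) - 1) = cB k := by
            unfold cB; subst hm; push_cast; ring_nf
          rw [this]; exact hx2
      · obtain ⟨m, hm⟩ := ho
        have hne : ¬ Even k := by rw [hm, Nat.even_iff]; omega
        have hyin : yin k 1 = 0 := by unfold yin; rw [if_neg hne]; ring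
        refine Set.mem_union_right _ (Set.mem_iUnion.mpr ⟨m, ?_⟩)
        refine Set.mem_union_right _ ?_
        refine ⟨Set.mem_Icc.mpr ⟨?_, ?_⟩, by rw [hyin]; rfl⟩
        · have : (1:ℝ) / (2 * ((m:ℝ) + 1) + 1) = cA k := by
            unfold cA; subst hm; push_cast; ring_nf
          rw [this]; exact hx1
        · have : (1:ℝ) / (2 * ((m:ℝ) + 1)) = cB k := by
            unfold cB; subst hm; push_cast; ring_nf
          rw [this]; exact hx2
    · -- right tooth of the strip : x = cB k = 1/(k+1)
      rw [phi_right hc2.le ht3]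
      refine Set.mem_union_right _ (Set.mem_iUnion.mpr ⟨k, ?_⟩)
      refine Set.mem_union_left _ (Set.mem_union_left _ ?_)
      refine ⟨?_, Set.mem_Icc.mpr (yin_mem (y := 3 - t) (by linarith) (by linarith))⟩
      simp only [Set.mem_singleton_iff, cX_one]
      rfl

end CombB1

namespace CombB1

lemma comb_sub_sq : combSet ⊆ Set.Icc (0:ℝ) 1 ×ˢ Set.Icc (0:ℝ) 1 := by
  rintro p (⟨hx, hy⟩ | hp)
  · simp only [Set.mem_singleton_iff] at hx
    exact ⟨by rw [hx]; exact Set.mem_Icc.mpr ⟨le_refl 0, zero_le_one⟩, hy⟩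
  · simp only [Set.mem_iUnion] at hp
    obtain ⟨n, hp⟩ := hp
    have hn : (0:ℝ) ≤ (n:ℝ) := Nat.cast_nonneg n
    rcases hp with (⟨hx, hy⟩ | ⟨hx, hy⟩) | ⟨hx, hy⟩
    · simp only [Set.mem_singleton_iff] at hx
      refine ⟨?_, hy⟩
      rw [hx]
      constructor
      · positivity
      · rw [div_le_one (by positivity)]; linarith
    · simp only [Set.mem_Icc] at hx
      simp only [Set.mem_singleton_iff] at hy
      refine ⟨⟨?_, ?_⟩, by rw [hy]; exact Set.mem_Icc.mpr ⟨zero_le_one, le_refl 1⟩⟩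
      · have : (0:ℝ) ≤ 1 / (2 * ((n:ℝ) + 1)) := by positivity
        linarith [hx.1]
      · have : (1:ℝ) / (2 * ((n:ℝ) + 1) - 1) ≤ 1 := by
          rw [div_le_one (by linarith)]; linarith
        linarith [hx.2]
    · simp only [Set.mem_Icc] at hx
      simp only [Set.mem_singleton_iff] at hy
      refine ⟨⟨?_, ?_⟩, by rw [hy]; exact Set.mem_Icc.mpr ⟨le_refl 0, zero_le_one⟩⟩
      · have : (0:ℝ) ≤ 1 / (2 * ((n:ℝ) + 1) + 1) := by positivity
        linarith [hx.1]
      · have : (1:ℝ) / (2 * ((n:ℝ) + 1)) ≤ 1 := by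
          rw [div_le_one (by linarith)]; linarith
        linarith [hx.2]

/-- the global (discontinuous along teeth accumulating at x = 0) retraction formula -/
noncomputable def cR (p : ℝ × ℝ) : ℝ × ℝ := cF (⌊p.1⁻¹⌋₊ - 1) p

lemma cR_eq {k : ℕ} {p : ℝ × ℝ} (h1 : cA k < p.1) (h2 : p.1 ≤ cB k) :
    cR p = cF k p := by
  have hx : 0 < p.1 := lt_trans (cA_pos k) h1
  have hfl : ⌊p.1⁻¹⌋₊ = k + 1 := by
    rw [Nat.floor_eq_iff (by positivity)]
    constructor
    · push_cast
      rw [← one_div]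
      calc ((k:ℝ) + 1) = 1 / cB k := by unfold cB; rw [one_div_one_div]
      _ ≤ 1 / p.1 := one_div_le_one_div_of_le hx h2
    · push_cast
      rw [← one_div]
      have ha : 1 / p.1 < 1 / cA k := one_div_lt_one_div_of_lt (cA_pos k) h1
      have hb : 1 / cA k = (k:ℝ) + 2 := by unfold cA; rw [one_div_one_div]
      linarith
  unfold cR
  rw [hfl]
  norm_num

lemma exists_strip {x : ℝ} (hx0 : 0 < x) (hx1 : x ≤ 1) :
    ∃ k : ℕ, cA k < x ∧ x ≤ cB k := by
  have hinv1 : (1:ℝ) ≤ x⁻¹ := by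
    rw [le_inv_comm₀ one_pos hx0]; simpa using hx1
  have hm : 1 ≤ ⌊x⁻¹⌋₊ := by
    exact_mod_cast Nat.one_le_floor_iff _ |>.mpr hinv1
  obtain ⟨j, hj⟩ : ∃ j, ⌊x⁻¹⌋₊ = j + 1 := ⟨⌊x⁻¹⌋₊ - 1, by omega⟩
  have h1 := Nat.floor_le (le_of_lt (by positivity : (0:ℝ) < x⁻¹))
  have h2 := Nat.lt_floor_add_one x⁻¹
  rw [hj] at h1 h2
  push_cast at h1 h2
  have hxx : x * x⁻¹ = 1 := mul_inv_cancel₀ (ne_of_gt hx0)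
  refine ⟨j, ?_, ?_⟩
  · unfold cA
    rw [div_lt_iff₀ (k2_pos j)]
    nlinarith [mul_lt_mul_of_pos_left h2 hx0]
  · unfold cB
    rw [le_div_iff₀ (k1_pos j)]
    nlinarith [mul_le_mul_of_nonneg_left h1 hx0.le]

lemma cR_tooth {k : ℕ} {y : ℝ} (h0 : 0 ≤ y) (h1 : y ≤ 1) :
    cR (cB k, y) = (cB k, y) := by
  rw [cR_eq (p := (cB k, y)) (cA_lt_cB k) le_rfl]
  exact cF_fix_right h0 h1

lemma cR_mem {p : ℝ × ℝ} (hx0 : 0 < p.1) (hx1 : p.1 ≤ 1) (hy0 : 0 ≤ p.2) (hy1 : p.2 ≤ 1) :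
    cR p ∈ combSet := by
  obtain ⟨k, h1, h2⟩ := exists_strip hx0 hx1
  rw [cR_eq h1 h2]
  exact cF_mem h1.le h2 hy0 hy1

end CombB1

namespace CombB1

lemma cR_fix {p : ℝ × ℝ} (hp : p ∈ combSet) (hx : 0 < p.1) : cR p = p := by
  rcases hp with ⟨hx0, _⟩ | hp
  · simp only [Set.mem_singleton_iff] at hx0
    rw [hx0] at hx; exact absurd hx (lt_irrefl 0)
  · simp only [Set.mem_iUnion] at hp
    obtain ⟨n, hp⟩ := hp
    rcases hp with (⟨h1, h2⟩ | ⟨h1, h2⟩) | ⟨h1, h2⟩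
    · -- a tooth
      simp only [Set.mem_singleton_iff] at h1
      simp only [Set.mem_Icc] at h2
      have hpe : p = (cB n, p.2) := Prod.ext (by rw [h1]; rfl) rfl
      rw [hpe]
      exact cR_tooth h2.1 h2.2
    · -- a top connecting segment, strip k = 2*n (even)
      simp only [Set.mem_Icc] at h1
      simp only [Set.mem_singleton_iff] at h2
      set k := 2 * n with hk
      have hA : cA k = 1 / (2 * ((n:ℝ) + 1)) := by unfold cA; push_cast [hk]; ring_nf
      have hB : cB k = 1 / (2 * ((n:ℝ) + 1) - 1) := by unfold cB; push_cast [hk]; ring_nf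
      have hx1 : cA k ≤ p.1 := by rw [hA]; exact h1.1
      have hx2 : p.1 ≤ cB k := by rw [hB]; exact h1.2
      have hyin : yin k 1 = 1 := by unfold yin; rw [if_pos ⟨n, by omega⟩]
      rcases eq_or_lt_of_le hx1 with he | hlt
      · -- left endpoint is the tip of a tooth
        have hpe : p = (cB (k+1), p.2) := Prod.ext (by rw [← he, cA_eq_cB_succ]) rfl
        rw [hpe]
        exact cR_tooth (by rw [h2]; norm_num) (by rw [h2])
      · have hpe : p = (p.1, yin k 1) := Prod.ext rfl (by rw [hyin, h2])
        rw [cR_eq hlt hx2, hpe]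
        exact cF_fix_conn hx1 hx2
    · -- a bottom connecting segment, strip k = 2*n+1 (odd)
      simp only [Set.mem_Icc] at h1
      simp only [Set.mem_singleton_iff] at h2
      set k := 2 * n + 1 with hk
      have hA : cA k = 1 / (2 * ((n:ℝ) + 1) + 1) := by unfold cA; push_cast [hk]; ring_nf
      have hB : cB k = 1 / (2 * ((n:ℝ) + 1)) := by unfold cB; push_cast [hk]; ring_nf
      have hx1 : cA k ≤ p.1 := by rw [hA]; exact h1.1
      have hx2 : p.1 ≤ cB k := by rw [hB]; exact h1.2
      have hyin : yin k 1 = 0 := by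
        unfold yin
        rw [if_neg (by rw [hk, Nat.even_iff]; omega)]
        ring
      rcases eq_or_lt_of_le hx1 with he | hlt
      · have hpe : p = (cB (k+1), p.2) := Prod.ext (by rw [← he, cA_eq_cB_succ]) rfl
        rw [hpe]
        exact cR_tooth (by rw [h2]) (by rw [h2]; norm_num)
      · have hpe : p = (p.1, yin k 1) := Prod.ext rfl (by rw [hyin, h2])
        rw [cR_eq hlt hx2, hpe]
        exact cF_fix_conn hx1 hx2

/-- the region where `cR` is continuous -/
def cS : Set (ℝ × ℝ) := Set.Ioc (0:ℝ) 1 ×ˢ Set.Icc (0:ℝ) 1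

lemma cR_contOn : ContinuousOn cR cS := by
  intro p hp
  obtain ⟨⟨hx0, hx1⟩, hy0, hy1⟩ := hp
  obtain ⟨k, h1, h2⟩ := exists_strip hx0 hx1
  rcases eq_or_lt_of_le h2 with hEq | hLt
  · -- p.1 = cB k : glue the two strips
    have hRF : cR p = cF k p := cR_eq h1 h2
    have hcwB : ContinuousWithinAt cR (cS ∩ {q : ℝ × ℝ | q.1 ≤ cB k}) p := by
      apply ((cF_cont k).continuousAt.continuousWithinAt).congr_of_eventuallyEq ?_ hRF
      have hmem : {q : ℝ × ℝ | cA k < q.1} ∈ nhdsWithin p (cS ∩ {q : ℝ × ℝ | q.1 ≤ cB k}) := by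
        apply mem_nhdsWithin_of_mem_nhds
        exact (isOpen_lt continuous_const continuous_fst).mem_nhds h1
      filter_upwards [hmem, self_mem_nhdsWithin] with q hq1 hq2
      exact cR_eq hq1 hq2.2
    have hcwA : ContinuousWithinAt cR (cS ∩ {q : ℝ × ℝ | cB k ≤ q.1}) p := by
      rcases k with _ | j
      · -- rightmost strip: the set is contained in {q.1 = 1}
        apply ((cF_cont 0).continuousAt.continuousWithinAt).congr_of_eventuallyEq ?_ hRF
        have hB0 : cB 0 = 1 := by unfold cB; norm_num
        filter_upwards [self_mem_nhdsWithin] with q hq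
        have hq1 : q.1 = cB 0 := le_antisymm (by rw [hB0]; exact hq.1.1.2) hq.2
        exact cR_eq (by rw [hq1]; exact cA_lt_cB 0) (le_of_eq hq1)
      · -- p sits on the tooth between strip j+1 and strip j
        have hpB : p.1 = cB (j+1) := hEq
        have hpA : p.1 = cA j := by rw [hpB, ← cA_eq_cB_succ]
        have hFj : cF j p = p := by
          have hpe : p = (cA j, p.2) := Prod.ext hpA rfl
          rw [hpe]; exact cF_fix_left hy0 hy1
        have hFk : cF (j+1) p = p := by
          have hpe : p = (cB (j+1), p.2) := Prod.ext hpB rfl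
          rw [hpe]; exact cF_fix_right hy0 hy1
        have hRj : cR p = cF j p := by rw [hRF, hFk, hFj]
        apply ((cF_cont j).continuousAt.continuousWithinAt).congr_of_eventuallyEq ?_ hRj
        have hmem2 : {q : ℝ × ℝ | q.1 < cB j} ∈
            nhdsWithin p (cS ∩ {q : ℝ × ℝ | cB (j+1) ≤ q.1}) := by
          apply mem_nhdsWithin_of_mem_nhds
          apply (isOpen_lt continuous_fst continuous_const).mem_nhds
          show p.1 < cB j
          rw [hpA]; exact cA_lt_cB j
        filter_upwards [hmem2, self_mem_nhdsWithin] with q hq1 hq2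
        have hge : cB (j+1) ≤ q.1 := hq2.2
        rcases eq_or_lt_of_le hge with heq | hlt
        · -- q on the tooth as well
          have hq2' := hq2.1.2
          have hqe : q = (cB (j+1), q.2) := Prod.ext heq.symm rfl
          have e1 : cR q = cF (j+1) q :=
            cR_eq (by rw [← heq]; exact cA_lt_cB (j+1)) (le_of_eq heq.symm)
          rw [e1, hqe, cF_fix_right hq2'.1 hq2'.2, ← cA_eq_cB_succ,
            cF_fix_left hq2'.1 hq2'.2]
        · -- q strictly inside strip j
          exact cR_eq (by rw [← cA_eq_cB_succ] at hlt; exact hlt) hq1.le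
    have hsub : cS ⊆ (cS ∩ {q : ℝ × ℝ | q.1 ≤ cB k}) ∪ (cS ∩ {q : ℝ × ℝ | cB k ≤ q.1}) := by
      intro q hq
      rcases le_total q.1 (cB k) with h | h
      · exact Or.inl ⟨hq, h⟩
      · exact Or.inr ⟨hq, h⟩
    exact (hcwB.union hcwA).mono hsub
  · -- p strictly inside strip k
    have hopen : IsOpen {q : ℝ × ℝ | cA k < q.1 ∧ q.1 < cB k} :=
      (isOpen_lt continuous_const continuous_fst).inter
        (isOpen_lt continuous_fst continuous_const)
    have hev : cR =ᶠ[nhds p] cF k := by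
      filter_upwards [hopen.mem_nhds ⟨h1, hLt⟩] with q hq
      exact cR_eq hq.1 hq.2.le
    exact ((continuousAt_congr hev).mpr (cF_cont k).continuousAt).continuousWithinAt

end CombB1

namespace CombB1

/-- the final retraction as a bare function -/
noncomputable def r0 (p : ℝ × ℝ) : ℝ × ℝ := if p.1 ≤ 0 then (0, p.2) else cR p

lemma r0_mem {p : ℝ × ℝ} (hp : p ∈ Set.Icc (0:ℝ) 1 ×ˢ Set.Icc (0:ℝ) 1) :
    r0 p ∈ combSet := by
  obtain ⟨⟨hx0, hx1⟩, hy⟩ := hp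
  unfold r0
  split
  · exact Or.inl ⟨rfl, hy⟩
  · exact cR_mem (lt_of_not_ge (by assumption)) hx1 hy.1 hy.2

lemma g_mem (n : ℕ) {p : ℝ × ℝ} (hp : p ∈ Set.Icc (0:ℝ) 1 ×ˢ Set.Icc (0:ℝ) 1) :
    cR (max p.1 (cA n), p.2) ∈ combSet := by
  obtain ⟨⟨hx0, hx1⟩, hy⟩ := hp
  exact cR_mem (lt_of_lt_of_le (cA_pos n) (le_max_right _ _))
    (max_le hx1 (cA_le_one n)) hy.1 hy.2

lemma cA_tendsto : Filter.Tendsto cA Filter.atTop (nhds 0) := by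
  have h := tendsto_one_div_add_atTop_nhds_zero_nat (𝕜 := ℝ)
  have h2 := h.comp (Filter.tendsto_add_atTop_nat 1)
  apply h2.congr
  intro n
  unfold cA
  simp only [Function.comp]
  push_cast
  ring_nf

end CombB1


open CombB1 in
theorem combSet_isB1Retract :
    IsB1Retract (Subtype.val ⁻¹' combSet :
      Set (Set.Icc (0 : ℝ) 1 ×ˢ Set.Icc (0 : ℝ) 1 : Set (ℝ × ℝ))) := by
  classical
  set Sq : Set (ℝ × ℝ) := Set.Icc (0:ℝ) 1 ×ˢ Set.Icc (0:ℝ) 1 with hSq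
  refine ⟨fun p => ⟨⟨r0 p.val, comb_sub_sq (r0_mem p.2)⟩, r0_mem p.2⟩, ⟨?_, ?_, ?_⟩, ?_⟩
  · -- the approximating sequence
    exact fun n p => ⟨⟨cR (max p.val.1 (cA n), p.val.2), comb_sub_sq (g_mem n p.2)⟩,
      g_mem n p.2⟩
  · -- continuity of each approximation
    intro n
    apply Continuous.subtype_mk
    apply Continuous.subtype_mk
    apply cR_contOn.comp_continuous
    · fun_prop
    · intro p
      exact ⟨⟨lt_of_lt_of_le (cA_pos n) (le_max_right _ _),
        max_le p.2.1.2 (cA_le_one n)⟩, p.2.2⟩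
  · -- pointwise convergence
    intro p
    rw [Topology.IsEmbedding.subtypeVal.tendsto_nhds_iff, Topology.IsEmbedding.subtypeVal.tendsto_nhds_iff]
    simp only [Function.comp]
    rcases le_or_gt p.val.1 0 with hle | hpos
    · -- the limiting segment
      have hx0 : p.val.1 = 0 := le_antisymm hle p.2.1.1
      have hval : r0 p.val = (0, p.val.2) := if_pos hle
      have hseq : ∀ n : ℕ, cR (max p.val.1 (cA n), p.val.2) = (cA n, p.val.2) := by
        intro n
        have hmax : max p.val.1 (cA n) = cA n :=
          max_eq_right (le_trans hle (cA_pos n).le)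
        rw [hmax, cA_eq_cB_succ]
        exact cR_tooth p.2.2.1 p.2.2.2
      rw [hval]
      apply Filter.Tendsto.congr (fun n => (hseq n).symm)
      exact (cA_tendsto.prodMk_nhds tendsto_const_nhds)
    · -- interior points: the sequence is eventually constant
      obtain ⟨N, hN⟩ := exists_nat_one_div_lt hpos
      have hval : r0 p.val = cR p.val := if_neg (not_le.mpr hpos)
      rw [hval]
      apply Filter.Tendsto.congr' ?_ tendsto_const_nhds
      rw [Filter.EventuallyEq, Filter.eventually_atTop]
      refine ⟨N, fun n hn => ?_⟩
      have h1 : cA n ≤ p.val.1 := by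
        calc cA n ≤ cA N := cA_antitone hn
        _ ≤ 1 / ((N:ℝ) + 1) := by
            unfold cA
            apply one_div_le_one_div_of_le (by positivity)
            linarith
        _ ≤ p.val.1 := hN.le
      show cR ↑p = cR ((↑p : ℝ × ℝ).1 ⊔ cA n, (↑p : ℝ × ℝ).2)
      have heta : ((↑p : ℝ × ℝ).1 ⊔ cA n, (↑p : ℝ × ℝ).2) = (↑p : ℝ × ℝ) := by
        rw [max_eq_left h1]
      rw [heta]
  · -- retraction property
    intro x hx
    apply Subtype.ext
    show r0 x.val = x.val
    unfold r0
    split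
    · have hx0 : x.val.1 = 0 := le_antisymm (by assumption) x.2.1.1
      exact Prod.ext hx0.symm rfl
    · exact cR_fix hx (lt_of_not_ge (by assumption))
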